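/- Suppose all data points satisfy x_j = B·e₁. For a two-layer linear GCN class with |w₂| ≤ D, ‖w₁‖₂ ≤ R, aggregation matrix Ā with equal row-neighborhood sums h = Σ_t Ā_{kt} for all k, the empirical Rademacher complexity over m labeled nodes is at least l²·B·D·R·h²/√(2m). -/

import Mathlib

/-- The Rademacher sign of a boolean: `+1` for `true`, `−1` for `false`. -/
def radSign (b : Bool) : ℝ := if b then 1 else -1

open Finset

def Zsum (m : ℕ) (ε : Fin m → Bool) : ℤ := ∑ i, (if ε i then 1 else -1)
def Tsum (m : ℕ) : ℤ := ∑ ε : Fin m → Bool, |Zsum m ε|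
def Nzero (m : ℕ) : ℕ := (Finset.univ.filter (fun ε : Fin m → Bool => Zsum m ε = 0)).card

lemma abs_succ_pred (s : ℤ) : |s + 1| + |s - 1| = 2 * |s| + (if s = 0 then 2 else 0) := by
  rcases lt_trichotomy s 0 with hs | hs | hs
  · rw [if_neg hs.ne, abs_of_neg hs, abs_of_nonpos (show s + 1 ≤ 0 by omega),
      abs_of_neg (show s - 1 < 0 by omega)]; ring
  · subst hs; norm_num
  · rw [if_neg hs.ne', abs_of_pos hs, abs_of_nonneg (show 0 ≤ s - 1 by omega),
      abs_of_pos (show 0 < s + 1 by omega)]; ring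

lemma Tsum_succ (m : ℕ) : Tsum (m + 1) = 2 * Tsum m + 2 * (Nzero m : ℤ) := by
  have h1 : Tsum (m + 1)
      = ∑ p : Bool × (Fin m → Bool), |(if p.1 then 1 else -1 : ℤ) + Zsum m p.2| := by
    rw [Tsum, ← (Fin.consEquiv (fun _ : Fin (m+1) => Bool)).sum_comp]
    refine Finset.sum_congr rfl fun p _ => ?_
    congr 1
    rw [Zsum, Fin.sum_univ_succ]
    simp [Fin.consEquiv, Zsum]
  rw [h1, Fintype.sum_prod_type, Fintype.sum_bool]
  norm_num
  have : ∀ ε : Fin m → Bool, |1 + Zsum m ε| + |(-1) + Zsum m ε|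
      = 2 * |Zsum m ε| + (if Zsum m ε = 0 then 2 else 0) := by
    intro ε
    have := abs_succ_pred (Zsum m ε)
    rw [add_comm (1:ℤ), ← this]; ring_nf
  rw [← Finset.sum_add_distrib]
  rw [Finset.sum_congr rfl (fun ε _ => this ε)]
  rw [Finset.sum_add_distrib, ← Finset.mul_sum, Finset.sum_ite]
  simp [Tsum, Nzero, mul_comm]

lemma Nzero_even (j : ℕ) : Nat.centralBinom j ≤ Nzero (2 * j) := by
  classical
  have key : ∀ s : Finset (Fin (2 * j)), s.card = j → Zsum (2 * j) (fun i => i ∈ s) = 0 := by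
    intro s hs
    have : Zsum (2 * j) (fun i => i ∈ s)
        = ∑ i : Fin (2 * j), ((if i ∈ s then (2 : ℤ) else 0) - 1) := by
      refine Finset.sum_congr rfl fun i _ => ?_
      by_cases hi : i ∈ s <;> simp [hi]
    rw [this, Finset.sum_sub_distrib, Finset.sum_ite_mem, Finset.univ_inter, Finset.sum_const,
      Finset.sum_const, hs]
    simp; omega
  have hinj : Set.InjOn (fun s : Finset (Fin (2*j)) => (fun i => decide (i ∈ s) : Fin (2*j) → Bool))
      (Finset.powersetCard j (Finset.univ : Finset (Fin (2*j)))) := by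
    intro s _ t _ hst
    ext i
    have := congrFun hst i
    simpa using this
  have hmaps : ∀ s ∈ Finset.powersetCard j (Finset.univ : Finset (Fin (2*j))),
      (fun i => decide (i ∈ s) : Fin (2*j) → Bool) ∈
        Finset.univ.filter (fun ε : Fin (2*j) → Bool => Zsum (2*j) ε = 0) := by
    intro s hs
    simp only [Finset.mem_filter, Finset.mem_univ, true_and]
    have hcard : s.card = j := (Finset.mem_powersetCard.mp hs).2
    have := key s hcard
    simpa using this
  have := Finset.card_le_card_of_injOn _ hmaps hinj
  rwa [Finset.card_powersetCard, Finset.card_univ, Fintype.card_fin] at this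

lemma binom_sq (j : ℕ) (hj : 1 ≤ j) : 16 ^ j ≤ 4 * j * (Nat.centralBinom j) ^ 2 := by
  induction j with
  | zero => omega
  | succ k ih =>
    rcases Nat.eq_or_lt_of_le hj with h1 | h1
    · have hk0 : k = 0 := by omega
      subst hk0; decide
    · have hk : 1 ≤ k := by omega
      have IH := ih hk
      have hrec : (k + 1) * (k + 1).centralBinom = 2 * (2 * k + 1) * k.centralBinom :=
        Nat.succ_mul_centralBinom_succ k
      have key : (k+1) * (4 * (k+1) * (Nat.centralBinom (k+1))^2)
          = 4 * (2 * (2*k+1) * k.centralBinom)^2 := by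
        rw [← hrec]; ring
      have h2 : (k+1) * 16^(k+1) ≤ (k+1) * (4 * (k+1) * (Nat.centralBinom (k+1))^2) := by
        rw [key]
        have : (k+1) * 16^(k+1) = 16 * (k+1) * 16^k := by ring
        rw [this]
        calc 16 * (k+1) * 16^k ≤ 16 * (k+1) * (4 * k * (Nat.centralBinom k)^2) :=
              Nat.mul_le_mul_left _ IH
          _ ≤ 4 * (2 * (2*k+1) * k.centralBinom)^2 := by nlinarith [sq_nonneg (Nat.centralBinom k)]
      exact Nat.le_of_mul_le_mul_left h2 (by omega)

lemma binom_real (j : ℕ) (hj : 1 ≤ j) :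
    (4 : ℝ) ^ j ≤ 2 * Real.sqrt j * (Nat.centralBinom j) := by
  have h1 : ((16 : ℝ)) ^ j ≤ 4 * j * (Nat.centralBinom j) ^ 2 := by
    exact_mod_cast binom_sq j hj
  have hs : Real.sqrt j * Real.sqrt j = (j : ℝ) := Real.mul_self_sqrt (Nat.cast_nonneg j)
  have ha : (0:ℝ) < 4 ^ j := by positivity
  have hb : (0:ℝ) ≤ 2 * Real.sqrt j * (Nat.centralBinom j) := by positivity
  have hsq : ((4:ℝ) ^ j) ^ 2 ≤ (2 * Real.sqrt j * (Nat.centralBinom j)) ^ 2 := by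
    have h16 : ((4:ℝ) ^ j) ^ 2 = 16 ^ j := by
      rw [← pow_mul, pow_mul']; norm_num
    rw [h16]
    calc ((16:ℝ)) ^ j ≤ 4 * j * (Nat.centralBinom j) ^ 2 := h1
      _ = (2 * Real.sqrt j * (Nat.centralBinom j)) ^ 2 := by
            rw [mul_pow, mul_pow, sq (Real.sqrt (j:ℝ)), hs]; ring
  calc (4:ℝ) ^ j = Real.sqrt (((4:ℝ) ^ j) ^ 2) := (Real.sqrt_sq ha.le).symm
    _ ≤ Real.sqrt ((2 * Real.sqrt j * (Nat.centralBinom j)) ^ 2) := Real.sqrt_le_sqrt hsq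
    _ = 2 * Real.sqrt j * (Nat.centralBinom j) := Real.sqrt_sq hb

lemma Tsum_two_step (m : ℕ) :
    4 * (Tsum m : ℝ) + 4 * (Nzero m : ℝ) ≤ (Tsum (m + 2) : ℝ) := by
  have h1 := Tsum_succ m
  have h2 := Tsum_succ (m + 1)
  have hN : (0 : ℤ) ≤ (Nzero (m+1) : ℤ) := Int.natCast_nonneg _
  have : (Tsum (m+2) : ℤ) = 4 * Tsum m + 4 * (Nzero m : ℤ) + 2 * (Nzero (m+1) : ℤ) := by
    rw [show m + 2 = (m + 1) + 1 from rfl, h2, h1]; ring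
  have := this
  push_cast [this]
  have : (0:ℝ) ≤ (Nzero (m+1) : ℝ) := by positivity
  linarith

lemma Tsum_even (j : ℕ) (hj : 1 ≤ j) : (4:ℝ)^j * Real.sqrt j ≤ (Tsum (2*j) : ℝ) := by
  induction j, hj using Nat.le_induction with
  | base =>
    have : Tsum 2 = 4 := by decide
    rw [this]
    norm_num
  | succ k hk ih =>
    have hstep := Tsum_two_step (2 * k)
    have hNk : (Nat.centralBinom k : ℝ) ≤ (Nzero (2*k) : ℝ) := by
      exact_mod_cast Nzero_even k
    have hbin := binom_real k hk
    set a := Real.sqrt k with ha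
    set b := Real.sqrt (k+1) with hb
    have ha2 : a * a = (k:ℝ) := Real.mul_self_sqrt (by positivity)
    have hb2 : b * b = (k:ℝ) + 1 := by
      rw [hb]
      rw [show ((k:ℝ)+1) = ((k+1:ℕ):ℝ) by push_cast; ring] at *
      exact Real.mul_self_sqrt (by positivity)
    have hab : a ≤ b := Real.sqrt_le_sqrt (by push_cast; linarith)
    have ha0 : 0 ≤ a := Real.sqrt_nonneg _
    have hC0 : (0:ℝ) ≤ (Nat.centralBinom k : ℝ) := by positivity
    have key : (4:ℝ)^k * b ≤ 4^k * a + (Nat.centralBinom k : ℝ) := by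
      have e1 : (b - a) * (4:ℝ)^k ≤ (b - a) * (2 * a * (Nat.centralBinom k : ℝ)) :=
        mul_le_mul_of_nonneg_left hbin (sub_nonneg.mpr hab)
      have e3 : (Nat.centralBinom k : ℝ) * (b*b) - (Nat.centralBinom k : ℝ) * (a*a)
          = (Nat.centralBinom k : ℝ) := by rw [hb2, ha2]; ring
      have B : 0 ≤ (Nat.centralBinom k : ℝ) * ((b-a)*(b-a)) :=
        mul_nonneg hC0 (mul_self_nonneg _)
      nlinarith [e1, e3, B]
    have h2k : 2 * (k + 1) = 2 * k + 2 := by ring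
    rw [h2k]
    have hcast : ((k+1:ℕ):ℝ) = (k:ℝ) + 1 := by push_cast; ring
    calc (4:ℝ)^(k+1) * Real.sqrt ((k+1:ℕ):ℝ)
        = 4 * (4^k * b) := by rw [hcast, ← hb]; ring
      _ ≤ 4 * (4^k * a + (Nat.centralBinom k : ℝ)) := by linarith
      _ = 4 * ((4:ℝ)^k * a) + 4 * (Nat.centralBinom k : ℝ) := by ring
      _ ≤ 4 * (Tsum (2*k) : ℝ) + 4 * (Nzero (2*k) : ℝ) := by
          have := ih
          nlinarith
      _ ≤ (Tsum (2*k+2) : ℝ) := hstep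

lemma khintchine (m : ℕ) (hm : 1 ≤ m) :
    (2:ℝ)^m * Real.sqrt (m / 2) ≤ (Tsum m : ℝ) := by
  rcases Nat.even_or_odd m with ⟨j, hj⟩ | ⟨j, hj⟩
  · subst hj
    have hj1 : 1 ≤ j := by omega
    have h1 : ((j + j : ℕ) : ℝ) / 2 = (j : ℝ) := by push_cast; ring
    have h2 : (2:ℝ)^(j+j) = 4^j := by
      rw [← two_mul, pow_mul]; norm_num
    rw [h1, h2]
    have := Tsum_even j hj1
    rw [show 2 * j = j + j by ring] at this
    exact this
  · subst hj
    rcases Nat.eq_zero_or_pos j with hj0 | hj1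
    · subst hj0
      have hT : Tsum (2 * 0 + 1) = 2 := by decide
      rw [hT]
      have hs : Real.sqrt (((2*0+1 : ℕ):ℝ)/2) ≤ 1 := by
        rw [show (1:ℝ) = Real.sqrt 1 by simp]
        exact Real.sqrt_le_sqrt (by norm_num)
      have hs0 : 0 ≤ Real.sqrt (((2*0+1 : ℕ):ℝ)/2) := Real.sqrt_nonneg _
      push_cast
      nlinarith [hs, hs0]
    · -- m = 2j+1, j ≥ 1
      have h1 := Tsum_succ (2 * j)
      have hNk : (Nat.centralBinom j : ℝ) ≤ (Nzero (2*j) : ℝ) := by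
        exact_mod_cast Nzero_even j
      have hbin := binom_real j hj1
      have hTe := Tsum_even j hj1
      set a := Real.sqrt j with ha
      set b := Real.sqrt (((2*j+1 : ℕ):ℝ)/2) with hb
      have ha2 : a * a = (j:ℝ) := Real.mul_self_sqrt (by positivity)
      have hb2 : b * b = ((2*j+1 : ℕ):ℝ)/2 := Real.mul_self_sqrt (by positivity)
      have hab : a ≤ b := Real.sqrt_le_sqrt (by push_cast; linarith)
      have ha0 : 0 ≤ a := Real.sqrt_nonneg _
      have hC0 : (0:ℝ) ≤ (Nat.centralBinom j : ℝ) := by positivity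
      have key : (4:ℝ)^j * b ≤ 4^j * a + (Nat.centralBinom j : ℝ) := by
        have e1 : (b - a) * (4:ℝ)^j ≤ (b - a) * (2 * a * (Nat.centralBinom j : ℝ)) :=
          mul_le_mul_of_nonneg_left hbin (sub_nonneg.mpr hab)
        have e3 : (Nat.centralBinom j : ℝ) * (b*b) - (Nat.centralBinom j : ℝ) * (a*a)
            = (Nat.centralBinom j : ℝ) * (1/2) := by rw [hb2, ha2]; push_cast; ring
        have B : 0 ≤ (Nat.centralBinom j : ℝ) * ((b-a)*(b-a)) :=
          mul_nonneg hC0 (mul_self_nonneg _)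
        nlinarith [e1, e3, B]
      have h2 : (2:ℝ)^(2*j+1) = 2 * 4^j := by
        rw [pow_succ, pow_mul]; norm_num; ring
      rw [h2]
      have hcastT : (Tsum (2*j+1) : ℝ) = 2 * (Tsum (2*j) : ℝ) + 2 * (Nzero (2*j) : ℝ) := by
        exact_mod_cast congrArg (Int.cast : ℤ → ℝ) h1
      rw [hcastT]
      calc 2 * (4:ℝ)^j * b ≤ 2 * (4^j * a + (Nat.centralBinom j : ℝ)) := by linarith
        _ ≤ 2 * (Tsum (2*j) : ℝ) + 2 * (Nzero (2*j) : ℝ) := by linarith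

/-- Lower bound on the empirical Rademacher complexity of a two-layer linear GCN
class with aligned data `x_j = B·e₁`, aggregation matrix `Ā` with constant row
sums `h`, and norm constraints `‖w₁‖ ≤ R`, `|w₂| ≤ D`:
`R̂ ≥ l²·B·D·R·h²/√(2m)`. -/
theorem empRad_gcn_lower_bound (d n m : ℕ) (hd : 0 < d) (hm0 : 0 < m) (hmn : m ≤ n)
    (Abar : Matrix (Fin n) (Fin n) ℝ) (hAnn : ∀ i j, 0 ≤ Abar i j)
    (h : ℝ) (hrow : ∀ k, ∑ t, Abar k t = h)
    (B l D R : ℝ) (hB : 0 < B) (hl : 0 < l) (hD : 0 ≤ D) (hR : 0 ≤ R)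
    (x : Fin n → EuclideanSpace ℝ (Fin d))
    (hx : ∀ j, x j = B • EuclideanSpace.single (⟨0, hd⟩ : Fin d) (1 : ℝ)) :
    ((2 : ℝ) ^ m)⁻¹ * ∑ ε : Fin m → Bool,
        (1 / (m : ℝ)) * sSup {t : ℝ | ∃ w₁ : EuclideanSpace ℝ (Fin d), ∃ w₂ : ℝ,
          ‖w₁‖ ≤ R ∧ |w₂| ≤ D ∧
          t = |∑ i : Fin m, radSign (ε i) *
            (l * (w₂ * ∑ v, Abar (Fin.castLE hmn i) v *
              (l * ∑ j, Abar v j * inner ℝ (x j) w₁)))|} ≥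
      l ^ 2 * B * D * R * h ^ 2 / Real.sqrt (2 * m) := by
  classical
  have hn : 0 < n := lt_of_lt_of_le hm0 hmn
  set i0 : Fin d := ⟨0, hd⟩
  have hh0 : 0 ≤ h := by
    rw [← hrow ⟨0, hn⟩]
    exact Finset.sum_nonneg fun t _ => hAnn _ t
  set c : ℝ := l ^ 2 * B * D * R * h ^ 2 with hc
  have hc0 : 0 ≤ c := by positivity
  -- inner product computation
  have hinner : ∀ (j : Fin n) (w₁ : EuclideanSpace ℝ (Fin d)),
      (inner ℝ (x j) w₁ : ℝ) = B * w₁ i0 := by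
    intro j w₁
    rw [hx j, real_inner_smul_left, EuclideanSpace.inner_single_left]
    simp
  -- factorization of the inner sum
  have hfact : ∀ (ε : Fin m → Bool) (w₁ : EuclideanSpace ℝ (Fin d)) (w₂ : ℝ),
      (∑ i : Fin m, radSign (ε i) *
          (l * (w₂ * ∑ v, Abar (Fin.castLE hmn i) v *
            (l * ∑ j, Abar v j * inner ℝ (x j) w₁))))
        = (l ^ 2 * w₂ * B * (w₁ i0) * h ^ 2) * ((Zsum m ε : ℤ) : ℝ) := by
    intro ε w₁ w₂
    have e1 : ∀ v : Fin n, ∑ j, Abar v j * (inner ℝ (x j) w₁ : ℝ) = h * (B * w₁ i0) := by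
      intro v
      calc ∑ j, Abar v j * (inner ℝ (x j) w₁ : ℝ) = ∑ j, Abar v j * (B * w₁ i0) := by
            exact Finset.sum_congr rfl fun j _ => by rw [hinner]
        _ = (∑ j, Abar v j) * (B * w₁ i0) := by rw [Finset.sum_mul]
        _ = h * (B * w₁ i0) := by rw [hrow]
    have e2 : ∀ i : Fin n, ∑ v, Abar i v * (l * (h * (B * w₁ i0)))
        = h * (l * (h * (B * w₁ i0))) := by
      intro i
      rw [← Finset.sum_mul, hrow]
    calc (∑ i : Fin m, radSign (ε i) *
            (l * (w₂ * ∑ v, Abar (Fin.castLE hmn i) v *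
              (l * ∑ j, Abar v j * inner ℝ (x j) w₁))))
        = ∑ i : Fin m, radSign (ε i) * (l * (w₂ * (h * (l * (h * (B * w₁ i0)))))) := by
          refine Finset.sum_congr rfl fun i _ => ?_
          congr 2
          rw [show (∑ v, Abar (Fin.castLE hmn i) v *
              (l * ∑ j, Abar v j * inner ℝ (x j) w₁))
            = ∑ v, Abar (Fin.castLE hmn i) v * (l * (h * (B * w₁ i0))) from
              Finset.sum_congr rfl fun v _ => by rw [e1], e2]
      _ = (l ^ 2 * w₂ * B * (w₁ i0) * h ^ 2) * ((Zsum m ε : ℤ) : ℝ) := by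
          rw [Zsum]
          push_cast
          rw [Finset.mul_sum]
          refine Finset.sum_congr rfl fun i _ => ?_
          cases hεi : ε i <;> simp [radSign, hεi] <;> ring
  -- the per-ε supremum set
  set S : (Fin m → Bool) → Set ℝ := fun ε =>
    {t : ℝ | ∃ w₁ : EuclideanSpace ℝ (Fin d), ∃ w₂ : ℝ,
      ‖w₁‖ ≤ R ∧ |w₂| ≤ D ∧
      t = |∑ i : Fin m, radSign (ε i) *
        (l * (w₂ * ∑ v, Abar (Fin.castLE hmn i) v *
          (l * ∑ j, Abar v j * inner ℝ (x j) w₁)))|} with hS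
  -- upper bound for the set
  have hbdd : ∀ ε, ∀ t ∈ S ε, t ≤ c * m := by
    rintro ε t ⟨w₁, w₂, hw₁, hw₂, rfl⟩
    rw [hfact ε w₁ w₂, abs_mul]
    have hu : |w₁ i0| ≤ R := by
      have hab := abs_real_inner_le_norm (EuclideanSpace.single i0 (1:ℝ)) w₁
      rw [EuclideanSpace.inner_single_left] at hab
      simp only [map_one, one_mul, EuclideanSpace.norm_single, norm_one, one_mul] at hab
      exact hab.trans hw₁
    have hZ : |((Zsum m ε : ℤ) : ℝ)| ≤ (m : ℝ) := by
      rw [Zsum]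
      push_cast
      calc |∑ i : Fin m, (if ε i then (1:ℝ) else -1)|
          ≤ ∑ i : Fin m, |(if ε i then (1:ℝ) else -1)| := Finset.abs_sum_le_sum_abs _ _
        _ = ∑ i : Fin m, 1 := Finset.sum_congr rfl fun i _ => by
            cases hεi : ε i <;> simp
        _ = (m : ℝ) := by simp
    have hK : |l ^ 2 * w₂ * B * (w₁ i0) * h ^ 2| ≤ c := by
      rw [hc]
      rw [abs_mul, abs_mul, abs_mul, abs_mul]
      have h1 : |l ^ 2| = l ^ 2 := abs_of_nonneg (by positivity)
      have h2 : |B| = B := abs_of_nonneg hB.le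
      have h3 : |h ^ 2| = h ^ 2 := abs_of_nonneg (by positivity)
      rw [h1, h2, h3]
      have hDR := mul_le_mul hw₂ hu (abs_nonneg _) hD
      have h4 : (0:ℝ) ≤ l ^ 2 * B * h ^ 2 := by positivity
      nlinarith [mul_le_mul_of_nonneg_left hDR h4]
    exact mul_le_mul hK hZ (abs_nonneg _) hc0
  -- membership of the witness value
  have hmem : ∀ ε, c * |((Zsum m ε : ℤ) : ℝ)| ∈ S ε := by
    intro ε
    refine ⟨EuclideanSpace.single i0 R, D, ?_, ?_, ?_⟩
    · rw [EuclideanSpace.norm_single]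
      simp [abs_of_nonneg hR]
    · rw [abs_of_nonneg hD]
    · rw [hfact ε (EuclideanSpace.single i0 R) D, abs_mul]
      congr 1
      rw [EuclideanSpace.single_apply, if_pos rfl]
      rw [abs_of_nonneg]
      · rw [hc]; ring
      · positivity
  -- lower bound each sSup
  have hsup : ∀ ε, c * |((Zsum m ε : ℤ) : ℝ)| ≤ sSup (S ε) := by
    intro ε
    exact le_csSup ⟨c * m, fun t ht => hbdd ε t ht⟩ (hmem ε)
  -- Khintchine
  have hkh := khintchine m hm0
  have hm0' : (0:ℝ) < m := by exact_mod_cast hm0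
  have h2m : (0:ℝ) < 2 ^ m := by positivity
  have hTZ : (Tsum m : ℝ) = ∑ ε : Fin m → Bool, |((Zsum m ε : ℤ) : ℝ)| := by
    rw [Tsum]
    push_cast
    rfl
  have hchain : ((2 : ℝ) ^ m)⁻¹ * ∑ ε : Fin m → Bool, (1 / (m : ℝ)) * sSup (S ε)
      ≥ ((2 : ℝ) ^ m)⁻¹ * ((1 / (m : ℝ)) * (c * (Tsum m : ℝ))) := by
    rw [ge_iff_le]
    apply mul_le_mul_of_nonneg_left _ (by positivity)
    rw [hTZ, Finset.mul_sum, Finset.mul_sum]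
    refine Finset.sum_le_sum fun ε _ => ?_
    have h1m : (0:ℝ) ≤ 1 / (m:ℝ) := by positivity
    exact mul_le_mul_of_nonneg_left (hsup ε) h1m
  refine le_trans ?_ hchain
  have hsq : Real.sqrt (2 * m) * Real.sqrt ((m:ℝ) / 2) = (m : ℝ) := by
    rw [← Real.sqrt_mul (by positivity)]
    rw [show (2 * (m:ℝ)) * ((m:ℝ)/2) = (m:ℝ)^2 by ring]
    exact Real.sqrt_sq hm0'.le
  have hs2m : (0:ℝ) < Real.sqrt (2 * m) := Real.sqrt_pos.mpr (by positivity)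
  have step1 : c / Real.sqrt (2 * (m:ℝ)) = c * Real.sqrt ((m:ℝ)/2) / m := by
    rw [div_eq_div_iff hs2m.ne' hm0'.ne']
    calc c * (m:ℝ) = c * (Real.sqrt (2 * m) * Real.sqrt ((m:ℝ)/2)) := by rw [hsq]
      _ = c * Real.sqrt ((m:ℝ)/2) * Real.sqrt (2 * m) := by ring
  have hT' : c * ((2:ℝ)^m * Real.sqrt ((m:ℝ)/2)) ≤ c * (Tsum m : ℝ) :=
    mul_le_mul_of_nonneg_left hkh hc0
  rw [step1]
  calc c * Real.sqrt ((m:ℝ)/2) / m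
      = ((2:ℝ)^m)⁻¹ * ((1/(m:ℝ)) * (c * ((2:ℝ)^m * Real.sqrt ((m:ℝ)/2)))) := by
        field_simp
    _ ≤ ((2:ℝ)^m)⁻¹ * ((1/(m:ℝ)) * (c * (Tsum m : ℝ))) := by
        apply mul_le_mul_of_nonneg_left _ (by positivity)
        apply mul_le_mul_of_nonneg_left hT' (by positivity)
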